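/- A homogeneous polynomial p of degree m on ℝ^{n+1} that is harmonic (Δp = 0 for the Euclidean Laplacian) restricts on the unit sphere S^n to an eigenfunction of the spherical Laplace–Beltrami operator with eigenvalue m(m+n-1): Δ_{S^n}(p|_{S^n}) + m(m+n-1)·(p|_{S^n}) = 0. -/

import Mathlib

open MvPolynomial

variable {d : ℕ}

noncomputable def Pf (p : MvPolynomial (Fin d) ℝ) (y : EuclideanSpace ℝ (Fin d)) : ℝ :=
  eval (fun i => y i) p

noncomputable def Dp (p : MvPolynomial (Fin d) ℝ) (y : EuclideanSpace ℝ (Fin d)) :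
    EuclideanSpace ℝ (Fin d) →L[ℝ] ℝ :=
  ∑ i, Pf (pderiv i p) y • EuclideanSpace.proj i

lemma Dp_apply (p : MvPolynomial (Fin d) ℝ) (y v : EuclideanSpace ℝ (Fin d)) :
    Dp p y v = ∑ i, Pf (pderiv i p) y * v i := by
  simp [Dp]

lemma Dp_single (p : MvPolynomial (Fin d) ℝ) (y : EuclideanSpace ℝ (Fin d)) (i : Fin d) :
    Dp p y (EuclideanSpace.single i 1) = Pf (pderiv i p) y := by
  rw [Dp_apply, Finset.sum_eq_single i]
  · simp [EuclideanSpace.single_apply]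
  · intro j _ hj
    simp [EuclideanSpace.single_apply, hj]
  · simp

lemma hasFDerivAt_coord (i : Fin d) (y : EuclideanSpace ℝ (Fin d)) :
    HasFDerivAt (fun y : EuclideanSpace ℝ (Fin d) => y i)
      (EuclideanSpace.proj i : EuclideanSpace ℝ (Fin d) →L[ℝ] ℝ) y :=
  (EuclideanSpace.proj i : EuclideanSpace ℝ (Fin d) →L[ℝ] ℝ).hasFDerivAt

lemma hasFDerivAt_Pf (p : MvPolynomial (Fin d) ℝ) (y : EuclideanSpace ℝ (Fin d)) :
    HasFDerivAt (Pf p) (Dp p y) y := by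
  induction p using MvPolynomial.induction_on with
  | C a =>
      have h : Dp (C a : MvPolynomial (Fin d) ℝ) y = 0 := by simp [Dp, Pf]
      rw [h]
      exact (hasFDerivAt_const a y).congr_of_eventuallyEq
        (by filter_upwards with z using by simp [Pf])
  | add q r hq hr =>
      have h : Dp (q + r) y = Dp q y + Dp r y := by
        simp [Dp, Pf, map_add, add_smul, Finset.sum_add_distrib]
      rw [h]
      exact (hq.add hr).congr_of_eventuallyEq
        (by filter_upwards with z using by simp [Pf])
  | mul_X q i hq =>
      have h2 : HasFDerivAt (fun y : EuclideanSpace ℝ (Fin d) => Pf q y * y i)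
          (Pf q y • (EuclideanSpace.proj i : EuclideanSpace ℝ (Fin d) →L[ℝ] ℝ)
            + y i • Dp q y) y :=
        hq.mul (hasFDerivAt_coord i y)
      have hD : Dp (q * X i) y =
          Pf q y • (EuclideanSpace.proj i : EuclideanSpace ℝ (Fin d) →L[ℝ] ℝ)
            + y i • Dp q y := by
        ext v
        have hterm : ∀ x : Fin d, Pf (pderiv x (q * X i)) y
            = Pf (pderiv x q) y * y i + (if i = x then Pf q y else 0) := by
          intro x
          simp [Pf, pderiv_mul, Pi.single_apply, apply_ite (eval fun j => y j),
            mul_ite, mul_one, mul_zero, eq_comm]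
          ring_nf
        simp only [Dp_apply, ContinuousLinearMap.add_apply, ContinuousLinearMap.smul_apply,
          PiLp.proj_apply, smul_eq_mul, hterm, add_mul, ite_mul, zero_mul,
          Finset.sum_add_distrib, Finset.sum_ite_eq, Finset.mem_univ, if_true]
        rw [add_comm]
        congr 1
        rw [Finset.mul_sum]
        exact Finset.sum_congr rfl fun x _ => by ring
      exact (h2.congr_of_eventuallyEq
        (by filter_upwards with z using by simp [Pf])).congr_fderiv hD.symm

lemma eval_smul_homog {σ : Type*} [Fintype σ] {m : ℕ} {p : MvPolynomial σ ℝ}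
    (hp : p.IsHomogeneous m) (c : ℝ) (f : σ → ℝ) :
    eval (fun i => c * f i) p = c ^ m * eval f p := by
  rw [eval_eq' (R := ℝ), eval_eq' (R := ℝ), Finset.mul_sum]
  refine Finset.sum_congr rfl fun e he => ?_
  have hdeg : e.degree = m := by
    by_contra h
    exact (mem_support_iff.mp he) (hp.coeff_eq_zero h)
  have hsum : ∑ i, e i = m := by
    rw [← hdeg, Finsupp.degree]
    exact (Finset.sum_subset (Finset.subset_univ _)
      (fun i _ hi => Finsupp.notMem_support_iff.mp hi)).symm
  have h1 : ∏ i, (c * f i) ^ e i = (∏ i, c ^ e i) * ∏ i, f i ^ e i := by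
    rw [← Finset.prod_mul_distrib]
    exact Finset.prod_congr rfl fun i _ => mul_pow _ _ _
  rw [h1, Finset.prod_pow_eq_pow_sum, hsum]
  ring

lemma Pf_smul {m : ℕ} {p : MvPolynomial (Fin d) ℝ} (hp : p.IsHomogeneous m)
    (c : ℝ) (y : EuclideanSpace ℝ (Fin d)) :
    Pf p (c • y) = c ^ m * Pf p y := by
  have : (fun i => (c • y) i) = fun i => c * y i := by
    funext i; simp
  rw [Pf, this, eval_smul_homog hp]
  rfl

lemma euler {m : ℕ} {p : MvPolynomial (Fin d) ℝ} (hp : p.IsHomogeneous m)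
    (y : EuclideanSpace ℝ (Fin d)) :
    ∑ i, Pf (pderiv i p) y * y i = m * Pf p y := by
  have hline : HasDerivAt (fun t : ℝ => t • y) y 1 := by
    simpa using (hasDerivAt_id (1:ℝ)).smul_const y
  have h1 : HasDerivAt (fun t : ℝ => Pf p (t • y)) (Dp p y y) 1 := by
    have := (hasFDerivAt_Pf p ((1:ℝ) • y)).comp_hasDerivAt 1 hline
    simp only [one_smul] at this
    exact this
  have h2 : HasDerivAt (fun t : ℝ => Pf p (t • y)) (m * Pf p y) 1 := by
    have heq : (fun t : ℝ => Pf p (t • y)) = fun t => t ^ m * Pf p y := by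
      funext t; exact Pf_smul hp t y
    rw [heq]
    simpa using (hasDerivAt_pow m (1:ℝ)).mul_const (Pf p y)
  have h3 := h1.unique h2
  rw [Dp_apply] at h3
  exact h3

lemma hasFDerivAt_rpow_mul (q' p' : MvPolynomial (Fin d) ℝ) (r : ℝ)
    (y : EuclideanSpace ℝ (Fin d)) (hy : Pf q' y ≠ 0) :
    HasFDerivAt (fun y => Pf q' y ^ r * Pf p' y)
      ((Pf q' y ^ r) • Dp p' y + (Pf p' y * (r * Pf q' y ^ (r - 1))) • Dp q' y) y := by
  have h1 : HasFDerivAt (fun y => Pf q' y ^ r)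
      ((r * Pf q' y ^ (r - 1)) • Dp q' y) y :=
    (hasFDerivAt_Pf q' y).rpow_const (Or.inl hy)
  have h2 := h1.mul (hasFDerivAt_Pf p' y)
  simp only [mul_smul] at h2 ⊢
  exact h2

/-- The Euclidean Laplacian of a function on `ℝ^d` (as `EuclideanSpace`),
`Δ F x = ∑ i ∂²F/∂x_i² (x)`. -/
noncomputable def eucLap {d : ℕ} (F : EuclideanSpace ℝ (Fin d) → ℝ)
    (x : EuclideanSpace ℝ (Fin d)) : ℝ :=
  ∑ i, fderiv ℝ (fun y => fderiv ℝ F y (EuclideanSpace.single i 1)) x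
    (EuclideanSpace.single i 1)

/-- A harmonic homogeneous polynomial `p` of degree `m` in `n+1` variables
restricts on the unit sphere `Sⁿ` to an eigenfunction of the spherical
Laplace–Beltrami operator with eigenvalue `m(m+n-1)`.  The spherical Laplacian
of `p|_{Sⁿ}` is computed, as usual, as the Euclidean Laplacian of the
degree-zero homogeneous extension `F(x) = p(x/|x|)` evaluated on the sphere;
thus the statement `Δ_{Sⁿ}(p|_{Sⁿ}) + m(m+n-1)·p|_{Sⁿ} = 0` reads:
for every `x` with `‖x‖ = 1`, `Δ F (x) + m(m+n-1)·p(x) = 0`. -/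
theorem stmt8 (n m : ℕ) (p : MvPolynomial (Fin (n + 1)) ℝ)
    (hp : p.IsHomogeneous m)
    (hharm : ∑ i, pderiv i (pderiv i p) = 0) :
    ∀ x : EuclideanSpace ℝ (Fin (n + 1)), ‖x‖ = 1 →
      eucLap (fun y => eval (fun i => y i / ‖y‖) p) x
        + ((m * (m + n - 1) : ℕ) : ℝ) * eval (fun i => x i) p = 0 := by
  intro x hx
  set q : MvPolynomial (Fin (n + 1)) ℝ := ∑ i, X i ^ 2 with hq_def
  set r : ℝ := -(m : ℝ) / 2 with hr_def
  set F : EuclideanSpace ℝ (Fin (n + 1)) → ℝ :=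
    fun y => eval (fun i => y i / ‖y‖) p with hF_def
  set G : EuclideanSpace ℝ (Fin (n + 1)) → ℝ :=
    fun y => Pf q y ^ r * Pf p y with hG_def
  have hPfq : ∀ y : EuclideanSpace ℝ (Fin (n + 1)), Pf q y = ∑ i, y i ^ 2 := by
    intro y; simp [Pf, hq_def, map_sum]
  have hq_pd : ∀ (j) (y : EuclideanSpace ℝ (Fin (n + 1))),
      Pf (pderiv j q) y = 2 * y j := by
    intro j y
    simp [Pf, hq_def, map_sum, Derivation.leibniz_pow, Pi.single_apply,
      apply_ite (eval fun i => y i), Finset.sum_ite_eq]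
  have hqnorm : ∀ y : EuclideanSpace ℝ (Fin (n + 1)), Pf q y = ‖y‖ ^ 2 := by
    intro y
    rw [hPfq, EuclideanSpace.norm_eq, Real.sq_sqrt (by positivity)]
    exact Finset.sum_congr rfl fun i _ => by rw [Real.norm_eq_abs, sq_abs]
  have hqnonneg : ∀ y : EuclideanSpace ℝ (Fin (n + 1)), 0 ≤ Pf q y :=
    fun y => by rw [hqnorm]; positivity
  have hqdiff : Differentiable ℝ (Pf q) := fun y => (hasFDerivAt_Pf q y).differentiableAt
  have hqcont : Continuous (Pf q) := hqdiff.continuous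
  set U : Set (EuclideanSpace ℝ (Fin (n + 1))) := Pf q ⁻¹' {0}ᶜ with hU_def
  have hUopen : IsOpen U := isOpen_compl_singleton.preimage hqcont
  have hFG : ∀ y ∈ U, F y = G y := by
    intro y hy
    have hy0 : Pf q y ≠ 0 := hy
    have ht : 0 < Pf q y := lt_of_le_of_ne (hqnonneg y) (Ne.symm hy0)
    have hyn : ‖y‖ = Pf q y ^ ((1 : ℝ) / 2) := by
      rw [← Real.sqrt_eq_rpow, hqnorm, Real.sqrt_sq (norm_nonneg y)]
    have hpow : (‖y‖)⁻¹ ^ m = Pf q y ^ r := by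
      rw [hyn, ← Real.rpow_natCast (Pf q y ^ ((1 : ℝ) / 2))⁻¹ m,
        Real.inv_rpow (Real.rpow_nonneg ht.le _), ← Real.rpow_mul ht.le,
        ← Real.rpow_neg ht.le]
      congr 1
      rw [hr_def]; ring
    have hdiv : (fun i => y i / ‖y‖) = fun i => (‖y‖)⁻¹ * y i := by
      funext i; rw [div_eq_inv_mul]
    calc F y = eval (fun i => (‖y‖)⁻¹ * y i) p := by rw [hF_def]; simp only [hdiv]
      _ = (‖y‖)⁻¹ ^ m * eval (fun i => y i) p := eval_smul_homog hp _ _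
      _ = G y := by rw [hpow]; rfl
  have hGd : ∀ y ∈ U, HasFDerivAt G
      ((Pf q y ^ r) • Dp p y + (Pf p y * (r * Pf q y ^ (r - 1))) • Dp q y) y :=
    fun y hy => hasFDerivAt_rpow_mul q p r y hy
  set H : Fin (n + 1) → EuclideanSpace ℝ (Fin (n + 1)) → ℝ := fun i y =>
    Pf q y ^ r * Pf (pderiv i p) y
      + (Pf p y * (r * Pf q y ^ (r - 1))) * (2 * y i) with hH_def
  have hx1 : Pf q x = 1 := by rw [hqnorm, hx]; norm_num
  have hxU : x ∈ U := by
    show Pf q x ∈ ({0}ᶜ : Set ℝ)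
    rw [hx1]; norm_num
  have hFH : ∀ i, (fun y => fderiv ℝ F y (EuclideanSpace.single i 1)) =ᶠ[nhds x] H i := by
    intro i
    filter_upwards [hUopen.mem_nhds hxU] with y hy
    have hFG' : F =ᶠ[nhds y] G := by
      filter_upwards [hUopen.mem_nhds hy] with z hz using hFG z hz
    rw [hFG'.fderiv_eq, (hGd y hy).fderiv]
    simp only [ContinuousLinearMap.add_apply, ContinuousLinearMap.smul_apply,
      Dp_single, smul_eq_mul, hq_pd, hH_def]
  have hHd : ∀ i, HasFDerivAt (H i)
      (((Pf q x ^ r) • Dp (pderiv i p) x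
          + (Pf (pderiv i p) x * (r * Pf q x ^ (r - 1))) • Dp q x)
        + ((r * (Pf q x ^ (r - 1) * Pf p x)) •
              ((2 : ℝ) • (EuclideanSpace.proj i : EuclideanSpace ℝ (Fin (n + 1)) →L[ℝ] ℝ))
          + (2 * x i) • (r • ((Pf q x ^ (r - 1)) • Dp p x
              + (Pf p x * ((r - 1) * Pf q x ^ (r - 1 - 1))) • Dp q x)))) x := by
    intro i
    have h1 := hasFDerivAt_rpow_mul q (pderiv i p) r x hxU
    have hK := hasFDerivAt_rpow_mul q p (r - 1) x hxU
    have hrK := hK.const_mul r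
    have h2i := (hasFDerivAt_coord i x).const_mul (2 : ℝ)
    have h2 := hrK.mul h2i
    refine (h1.add h2).congr_of_eventuallyEq ?_
    filter_upwards with z
    simp only [hH_def, Pi.add_apply, Pi.mul_apply]
    ring
  have hLap : ∀ i, fderiv ℝ (fun y => fderiv ℝ F y (EuclideanSpace.single i 1)) x
      (EuclideanSpace.single i 1)
      = Pf (pderiv i (pderiv i p)) x + 4 * r * (x i * Pf (pderiv i p) x)
        + 2 * r * Pf p x + (4 * r * (r - 1) * Pf p x) * (x i) ^ 2 := by
    intro i
    rw [(hFH i).fderiv_eq, (hHd i).fderiv]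
    simp only [ContinuousLinearMap.add_apply, ContinuousLinearMap.smul_apply,
      Dp_single, smul_eq_mul, hq_pd, hx1, Real.one_rpow, PiLp.proj_apply,
      EuclideanSpace.single_apply, if_pos rfl]
    norm_num
    ring_nf
  have hsum_harm : ∑ i, Pf (pderiv i (pderiv i p)) x = 0 := by
    have h0 : Pf (∑ i, pderiv i (pderiv i p)) x = 0 := by rw [hharm]; simp [Pf]
    simpa [Pf, map_sum] using h0
  have heuler : ∑ i, x i * Pf (pderiv i p) x = m * Pf p x := by
    rw [← euler hp x]
    exact Finset.sum_congr rfl fun i _ => mul_comm _ _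
  have hsq : ∑ i, (x i) ^ 2 = 1 := by rw [← hPfq, hx1]
  have hcast : ((m * (m + n - 1) : ℕ) : ℝ) = (m : ℝ) * ((m : ℝ) + (n : ℝ) - 1) := by
    cases m with
    | zero => simp
    | succ k =>
        have h1 : k + 1 + n - 1 = k + n := by omega
        rw [h1]; push_cast [Nat.cast_add]; ring
  have hmain : eucLap F x
      = ∑ i, (Pf (pderiv i (pderiv i p)) x + 4 * r * (x i * Pf (pderiv i p) x)
        + 2 * r * Pf p x + (4 * r * (r - 1) * Pf p x) * (x i) ^ 2) := by
    simp only [eucLap]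
    exact Finset.sum_congr rfl fun i _ => hLap i
  have hPfpx : eval (fun i => x i) p = Pf p x := rfl
  rw [hmain, hcast, hPfpx]
  rw [Finset.sum_add_distrib, Finset.sum_add_distrib, Finset.sum_add_distrib,
    ← Finset.mul_sum, ← Finset.mul_sum, hsum_harm, heuler]
  rw [Finset.sum_const, ← Finset.mul_sum, hsq, Finset.card_univ, Fintype.card_fin]
  simp only [nsmul_eq_mul]
  rw [hr_def]
  push_cast
  ring
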